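/- Let x* be a global minimizer of f over ℝ^d and let R = √(f(x*)) be the minimal bounding sphere radius. If x_1 belongs to the convex hull of {a_1, …, a_n}, then √(f(x_1))/2 ≤ R ≤ √(f(x_1)); equivalently, f(x*) ≤ f(x_1) ≤ 4·f(x*). -/
import Mathlib

private lemma sup'_sq_eq {n : ℕ} (hne : (Finset.univ : Finset (Fin n)).Nonempty)
    (g : Fin n → ℝ) (hg : ∀ i, 0 ≤ g i) :
    Finset.univ.sup' hne (fun i => g i ^ 2) = (Finset.univ.sup' hne g) ^ 2 := by
  apply le_antisymm
  · apply Finset.sup'_le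
    intro i _
    have h1 : g i ≤ Finset.univ.sup' hne g := Finset.le_sup' g (Finset.mem_univ i)
    exact pow_le_pow_left₀ (hg i) h1 2
  · obtain ⟨i, _, hi⟩ := Finset.exists_mem_eq_sup' hne g
    rw [hi]
    exact Finset.le_sup' (fun i => g i ^ 2) (Finset.mem_univ i)

/-- For `f x = max_i ‖x − a i‖²`, a global minimizer `x*`, and
`R = √(f x*)` the minimal bounding sphere radius: if `x 1` belongs to the convex hull of
the points, then `√(f x1)/2 ≤ R ≤ √(f x1)`. -/
theorem bounding_sphere_radius_bounds {d n : ℕ} (hn : 0 < n)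
    (a : Fin n → EuclideanSpace ℝ (Fin d))
    (xstar : EuclideanSpace ℝ (Fin d))
    (hmin : ∀ z : EuclideanSpace ℝ (Fin d),
      (Finset.univ.sup' (Finset.univ_nonempty_iff.mpr ⟨⟨0, hn⟩⟩)
          fun i => ‖xstar - a i‖ ^ 2) ≤
        Finset.univ.sup' (Finset.univ_nonempty_iff.mpr ⟨⟨0, hn⟩⟩)
          fun i => ‖z - a i‖ ^ 2)
    (R : ℝ)
    (hR : R = Real.sqrt (Finset.univ.sup' (Finset.univ_nonempty_iff.mpr ⟨⟨0, hn⟩⟩)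
      fun i => ‖xstar - a i‖ ^ 2))
    (x₁ : EuclideanSpace ℝ (Fin d)) (hx₁ : x₁ ∈ convexHull ℝ (Set.range a)) :
    Real.sqrt (Finset.univ.sup' (Finset.univ_nonempty_iff.mpr ⟨⟨0, hn⟩⟩)
        fun i => ‖x₁ - a i‖ ^ 2) / 2 ≤ R ∧
      R ≤ Real.sqrt (Finset.univ.sup' (Finset.univ_nonempty_iff.mpr ⟨⟨0, hn⟩⟩)
        fun i => ‖x₁ - a i‖ ^ 2) := by
  have hne : (Finset.univ : Finset (Fin n)).Nonempty :=
    Finset.univ_nonempty_iff.mpr ⟨⟨0, hn⟩⟩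
  set M := Finset.univ.sup' hne (fun i => ‖xstar - a i‖) with hM
  set N := Finset.univ.sup' hne (fun i => ‖x₁ - a i‖) with hN
  have hM0 : 0 ≤ M := le_trans (norm_nonneg _) (Finset.le_sup' (fun i => ‖xstar - a i‖) (Finset.mem_univ (⟨0, hn⟩ : Fin n)))
  have hN0 : 0 ≤ N := le_trans (norm_nonneg _) (Finset.le_sup' (fun i => ‖x₁ - a i‖) (Finset.mem_univ (⟨0, hn⟩ : Fin n)))
  have hMsq : Finset.univ.sup' hne (fun i => ‖xstar - a i‖ ^ 2) = M ^ 2 :=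
    sup'_sq_eq hne _ (fun i => norm_nonneg _)
  have hNsq : Finset.univ.sup' hne (fun i => ‖x₁ - a i‖ ^ 2) = N ^ 2 :=
    sup'_sq_eq hne _ (fun i => norm_nonneg _)
  have hRM : R = M := by
    rw [hR, hMsq, Real.sqrt_sq hM0]
  have hsqrtN : Real.sqrt (Finset.univ.sup' hne (fun i => ‖x₁ - a i‖ ^ 2)) = N := by
    rw [hNsq, Real.sqrt_sq hN0]
  -- x₁ is within M of xstar
  have hdist : ‖xstar - x₁‖ ≤ M := by
    have hsub : Set.range a ⊆ Metric.closedBall xstar M := by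
      rintro _ ⟨i, rfl⟩
      simp only [Metric.mem_closedBall, dist_eq_norm]
      rw [norm_sub_rev]
      exact Finset.le_sup' (fun i => ‖xstar - a i‖) (Finset.mem_univ i)
    have := convexHull_min hsub (convex_closedBall xstar M) hx₁
    simpa [Metric.mem_closedBall, dist_eq_norm, norm_sub_rev] using this
  have hN2M : N ≤ 2 * M := by
    apply Finset.sup'_le
    intro i _
    calc ‖x₁ - a i‖ ≤ ‖x₁ - xstar‖ + ‖xstar - a i‖ := norm_sub_le_norm_sub_add_norm_sub _ _ _
      _ ≤ M + M := by
          refine add_le_add ?_ (Finset.le_sup' (fun i => ‖xstar - a i‖) (Finset.mem_univ i))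
          rw [norm_sub_rev]; exact hdist
      _ = 2 * M := by ring
  constructor
  · rw [hsqrtN, hRM]
    linarith
  · rw [hsqrtN, hRM]
    have : M ^ 2 ≤ N ^ 2 := by rw [← hMsq, ← hNsq]; exact hmin x₁
    exact (pow_le_pow_iff_left₀ hM0 hN0 (by norm_num)).mp this
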